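/- With Σ_{k,ℓ} as in the recursive definition (parameters 0 < u < 1, σ > u - 1/2): if k = 2m > ℓ = 2n or k = 2m+1 > ℓ = 2n+1, then Σ_{k,ℓ} ≤ (1 - (1-u)/m) Σ_{k-2,ℓ}. -/

import Mathlib

/-- Even–even part: `SigEE u σ m n` is `Σ_{2m,2n}` of the recursive definition. -/
noncomputable def SigEE (u σ : ℝ) : ℕ → ℕ → ℝ
  | m, 0 => ∏ i ∈ Finset.Icc 1 m, (1 - (1 - u) / (i : ℝ))
  | m, n + 1 =>
      (SigEE u σ (m - 1) n
        - u * ∑ j ∈ (Finset.range (n + 1)).attach,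
            ((n.factorial : ℝ) * Real.Gamma ((j : ℕ) + 1/2 + σ) /
              ((j : ℕ).factorial * Real.Gamma ((n : ℝ) + 3/2 + σ))) * SigEE u σ (m - 1) (j : ℕ))
      + u * ∑ j ∈ (Finset.range (n + 1)).attach,
            ((n.factorial : ℝ) * Real.Gamma ((j : ℕ) + 1/2 + σ) /
              ((j : ℕ).factorial * Real.Gamma (((n : ℝ) + 1) + 1/2 + σ))) * SigEE u σ m (j : ℕ)
  termination_by m n => n
  decreasing_by
  · omega
  · exact Finset.mem_range.mp j.2
  · exact Finset.mem_range.mp j.2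

/-- Odd–odd part: `SigOO u σ m n` is `Σ_{2m+1,2n+1}` of the recursive definition. -/
noncomputable def SigOO (u σ : ℝ) (m n : ℕ) : ℝ :=
  SigEE u σ m n - u * ∑ j ∈ Finset.range (n + 1),
    ((n.factorial : ℝ) * Real.Gamma ((j : ℝ) + 1/2 + σ) /
      ((j.factorial : ℝ) * Real.Gamma ((n : ℝ) + 3/2 + σ))) * SigEE u σ m j

/-! ### Auxiliary development -/

/-- The weight coefficient `b_{n,j} = n! Γ(j+1/2+σ)/(j! Γ(n+3/2+σ))`. -/
noncomputable def bco (σ : ℝ) (n j : ℕ) : ℝ :=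
  (n.factorial : ℝ) * Real.Gamma ((j : ℝ) + 1/2 + σ) /
    ((j.factorial : ℝ) * Real.Gamma ((n : ℝ) + 3/2 + σ))

lemma sigOO_def (u σ : ℝ) (m n : ℕ) :
    SigOO u σ m n = SigEE u σ m n - u * ∑ j ∈ Finset.range (n+1), bco σ n j * SigEE u σ m j := rfl

lemma sigEE_succ (u σ : ℝ) (m n : ℕ) :
    SigEE u σ m (n+1) = SigOO u σ (m-1) n + SigEE u σ m n - SigOO u σ m n := by
  rw [SigEE]
  rw [Finset.sum_attach (Finset.range (n+1)) (fun j => ((n.factorial : ℝ) *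
    Real.Gamma ((j:ℝ) + 1/2 + σ) / ((j.factorial : ℝ) * Real.Gamma ((n : ℝ) + 3/2 + σ))) *
    SigEE u σ (m - 1) j)]
  rw [Finset.sum_attach (Finset.range (n+1)) (fun j => ((n.factorial : ℝ) *
    Real.Gamma ((j:ℝ) + 1/2 + σ) / ((j.factorial : ℝ) * Real.Gamma (((n : ℝ)+1) + 1/2 + σ))) *
    SigEE u σ m j)]
  rw [sigOO_def, sigOO_def]
  have h : ((n:ℝ)+1) + 1/2 + σ = (n:ℝ) + 3/2 + σ := by ring
  rw [h]
  unfold bco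
  ring

/-- `k`-th backward difference in `m` of `SigEE`. -/
noncomputable def TD (u σ : ℝ) : ℕ → ℕ → ℕ → ℝ
  | 0, m, n => SigEE u σ m n
  | k+1, m, n => TD u σ k m n - TD u σ k (m+1) n

/-- `k`-th backward difference in `m` of `SigOO`. -/
noncomputable def SD (u σ : ℝ) : ℕ → ℕ → ℕ → ℝ
  | 0, m, n => SigOO u σ m n
  | k+1, m, n => SD u σ k m n - SD u σ k (m+1) n

noncomputable def cc (u : ℝ) (m : ℕ) : ℝ := 1 - (1 - u) / (m : ℝ)

noncomputable def DT (u σ : ℝ) (k m n : ℕ) : ℝ := cc u (m+k) * TD u σ k (m-1) n - TD u σ k m n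

noncomputable def DS (u σ : ℝ) (k m n : ℕ) : ℝ := cc u (m+k) * SD u σ k (m-1) n - SD u σ k m n

lemma SD_eq (u σ : ℝ) : ∀ k m n, SD u σ k m n
    = TD u σ k m n - u * ∑ j ∈ Finset.range (n+1), bco σ n j * TD u σ k m j := by
  intro k
  induction k with
  | zero => intro m n; exact sigOO_def u σ m n
  | succ k ih =>
      intro m n
      show SD u σ k m n - SD u σ k (m+1) n = _
      rw [ih m n, ih (m+1) n]
      show _ = (TD u σ k m n - TD u σ k (m+1) n)
        - u * ∑ j ∈ Finset.range (n+1), bco σ n j * (TD u σ k m j - TD u σ k (m+1) j)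
      have hs : ∑ j ∈ Finset.range (n+1), bco σ n j * (TD u σ k m j - TD u σ k (m+1) j)
          = ∑ j ∈ Finset.range (n+1), bco σ n j * TD u σ k m j
            - ∑ j ∈ Finset.range (n+1), bco σ n j * TD u σ k (m+1) j := by
        rw [← Finset.sum_sub_distrib]
        exact Finset.sum_congr rfl fun j _ => by ring
      rw [hs]
      ring

lemma TD_succ (u σ : ℝ) : ∀ k m n, 1 ≤ m →
    TD u σ k m (n+1) = SD u σ k (m-1) n + TD u σ k m n - SD u σ k m n := by
  intro k
  induction k with
  | zero => intro m n _; exact sigEE_succ u σ m n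
  | succ k ih =>
      intro m n hm
      show TD u σ k m (n+1) - TD u σ k (m+1) (n+1) = _
      rw [ih m n hm, ih (m+1) n (by omega)]
      have h1 : (m+1) - 1 = m := by omega
      have h2 : (m-1) + 1 = m := by omega
      rw [h1]
      show _ = (SD u σ k (m-1) n - SD u σ k ((m-1)+1) n) + (TD u σ k m n - TD u σ k (m+1) n)
        - (SD u σ k m n - SD u σ k (m+1) n)
      rw [h2]
      ring

lemma DS_eq (u σ : ℝ) (k m n : ℕ) : DS u σ k m n
    = DT u σ k m n - u * ∑ j ∈ Finset.range (n+1), bco σ n j * DT u σ k m j := by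
  unfold DS DT
  rw [SD_eq u σ k (m-1) n, SD_eq u σ k m n]
  have hs : ∑ j ∈ Finset.range (n+1),
        bco σ n j * (cc u (m+k) * TD u σ k (m-1) j - TD u σ k m j)
      = cc u (m+k) * ∑ j ∈ Finset.range (n+1), bco σ n j * TD u σ k (m-1) j
        - ∑ j ∈ Finset.range (n+1), bco σ n j * TD u σ k m j := by
    rw [Finset.mul_sum, ← Finset.sum_sub_distrib]
    exact Finset.sum_congr rfl fun j _ => by ring
  rw [hs]
  ring

lemma DT_succ (u σ : ℝ) (k m n : ℕ) (hm : 2 ≤ m) :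
    DT u σ k m (n+1) = DT u σ k m n + DS u σ (k+1) (m-1) n := by
  unfold DT DS
  rw [TD_succ u σ k m n (by omega), TD_succ u σ k (m-1) n (by omega)]
  have h1 : (m-1) - 1 = m - 2 := by omega
  have h2 : (m-1) + (k+1) = m + k := by omega
  rw [h1, h2]
  show cc u (m+k) * (SD u σ k (m-2) n + TD u σ k (m-1) n - SD u σ k (m-1) n)
      - (SD u σ k (m-1) n + TD u σ k m n - SD u σ k m n)
    = (cc u (m+k) * TD u σ k (m-1) n - TD u σ k m n)
      + (cc u (m+k) * (SD u σ k (m-2) n - SD u σ k ((m-2)+1) n)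
          - (SD u σ k (m-1) n - SD u σ k ((m-1)+1) n))
  have h3 : (m-2) + 1 = m - 1 := by omega
  have h4 : (m-1) + 1 = m := by omega
  rw [h3, h4]
  ring

/-- Ratio identity for the base row `n = 0`. -/
lemma TD_zero_ratio (u σ : ℝ) : ∀ k m, 1 ≤ m →
    TD u σ k m 0 = (((m:ℝ) - 1 + u) / ((m:ℝ) + k)) * TD u σ k (m-1) 0 := by
  intro k
  induction k with
  | zero =>
      intro m hm
      simp only [TD, Nat.cast_zero, add_zero]
      rw [SigEE, SigEE]
      obtain ⟨t, rfl⟩ : ∃ t, m = t + 1 := ⟨m - 1, by omega⟩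
      rw [Finset.prod_Icc_succ_top (by omega : 1 ≤ t + 1)]
      have h1 : (t + 1) - 1 = t := by omega
      rw [h1]
      have ht : ((t:ℝ) + 1) ≠ 0 := by positivity
      push_cast
      field_simp
      ring
  | succ k ih =>
      intro m hm
      have hm' : (1:ℝ) ≤ (m:ℝ) := by exact_mod_cast hm
      simp only [TD]
      rw [show (m-1) + 1 = m by omega]
      have e2 := ih (m+1) (by omega)
      rw [show (m+1) - 1 = m by omega] at e2
      push_cast at e2
      rw [e2, ih m hm]
      have d1 : ((m:ℝ) + k) ≠ 0 := by positivity
      have d2 : ((m:ℝ) + 1 + k) ≠ 0 := by positivity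
      push_cast
      have d3 : ((m:ℝ) + (k + 1)) ≠ 0 := by positivity
      field_simp
      ring

lemma TD_zero_zero_nonneg (u σ : ℝ) (hu0 : 0 < u) (hu1 : u < 1) :
    ∀ k, 0 ≤ TD u σ k 0 0 := by
  intro k
  induction k with
  | zero =>
      simp only [TD]
      rw [SigEE]
      have he : Finset.Icc 1 0 = (∅ : Finset ℕ) := Finset.Icc_eq_empty (by omega)
      rw [he, Finset.prod_empty]
      norm_num
  | succ k ih =>
      simp only [TD]
      have := TD_zero_ratio u σ k 1 le_rfl
      simp only [Nat.cast_one] at this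
      rw [show (1:ℕ) - 1 = 0 from rfl] at this
      rw [this]
      have h1 : ((1:ℝ) - 1 + u) / ((1:ℝ) + k) ≤ 1 := by
        rw [div_le_one (by positivity)]
        simp
        nlinarith [Nat.cast_nonneg (α := ℝ) k]
      nlinarith [ih, div_nonneg (by linarith : (0:ℝ) ≤ 1 - 1 + u) (by positivity : (0:ℝ) ≤ 1 + (k:ℝ))]

lemma TD_zero_nonneg (u σ : ℝ) (hu0 : 0 < u) (hu1 : u < 1) :
    ∀ k m, 0 ≤ TD u σ k m 0 := by
  intro k m
  induction m with
  | zero => exact TD_zero_zero_nonneg u σ hu0 hu1 k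
  | succ m ih =>
      rw [TD_zero_ratio u σ k (m+1) (by omega)]
      have h1 : (m+1) - 1 = m := by omega
      rw [h1]
      apply mul_nonneg _ ih
      apply div_nonneg
      · push_cast; nlinarith [Nat.cast_nonneg (α := ℝ) m]
      · push_cast; positivity

lemma DT_zero_nonneg (u σ : ℝ) (hu0 : 0 < u) (hu1 : u < 1) (k m : ℕ) (hm : 1 ≤ m) :
    0 ≤ DT u σ k m 0 := by
  unfold DT
  rw [TD_zero_ratio u σ k m hm]
  have hmr : (1:ℝ) ≤ (m:ℝ) := by exact_mod_cast hm
  have hmk : (0:ℝ) < (m:ℝ) + k := by positivity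
  have hcc : cc u (m+k) - ((m:ℝ) - 1 + u) / ((m:ℝ) + k) = (k:ℝ) / ((m:ℝ) + k) := by
    unfold cc
    push_cast
    field_simp
    ring
  have h0 : 0 ≤ TD u σ k (m-1) 0 := TD_zero_nonneg u σ hu0 hu1 k (m-1)
  have h1 : 0 ≤ (k:ℝ) / ((m:ℝ) + k) := by positivity
  nlinarith [h0, h1, hcc]

lemma gamma_hockey (a : ℝ) (ha : 0 < a) :
    ∀ n : ℕ, ∑ j ∈ Finset.range (n+1), Real.Gamma ((j:ℝ) + a) / (j.factorial : ℝ)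
      = Real.Gamma ((n:ℝ) + 1 + a) / (a * (n.factorial : ℝ)) := by
  intro n
  induction n with
  | zero =>
      simp only [Finset.range_one, Finset.sum_singleton, Nat.cast_zero, zero_add,
        Nat.factorial_zero, Nat.cast_one, mul_one]
      rw [show (1:ℝ) + a = a + 1 by ring, Real.Gamma_add_one (ne_of_gt ha)]
      field_simp
  | succ n ih =>
      rw [Finset.sum_range_succ, ih]
      have hpos : (0:ℝ) < (n:ℝ) + 1 + a := by positivity
      have h2 : ((n:ℝ) + 1) + 1 + a = ((n:ℝ) + 1 + a) + 1 := by ring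
      push_cast
      rw [h2, Real.Gamma_add_one (ne_of_gt hpos)]
      have hf : ((n+1 : ℕ).factorial : ℝ) = ((n:ℝ)+1) * (n.factorial : ℝ) := by
        rw [Nat.factorial_succ]; push_cast; ring
      push_cast at hf ⊢
      rw [hf]
      have hn : (n.factorial : ℝ) ≠ 0 := Nat.cast_ne_zero.mpr n.factorial_ne_zero
      field_simp

lemma bco_nonneg (σ : ℝ) (hσ : -(1/2) < σ) (n j : ℕ) : 0 ≤ bco σ n j := by
  unfold bco
  have h1 : 0 < Real.Gamma ((j:ℝ) + 1/2 + σ) := Real.Gamma_pos_of_pos (by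
    have : (0:ℝ) ≤ (j:ℝ) := Nat.cast_nonneg j
    linarith)
  have h2 : 0 < Real.Gamma ((n:ℝ) + 3/2 + σ) := Real.Gamma_pos_of_pos (by
    have : (0:ℝ) ≤ (n:ℝ) := Nat.cast_nonneg n
    linarith)
  have h3 : (0:ℝ) < n.factorial := by exact_mod_cast n.factorial_pos
  have h4 : (0:ℝ) < j.factorial := by exact_mod_cast j.factorial_pos
  positivity

lemma sum_bco (σ : ℝ) (hσ : -(1/2) < σ) (n : ℕ) :
    ∑ j ∈ Finset.range (n+1), bco σ n j = 1 / (1/2 + σ) := by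
  have ha : (0:ℝ) < 1/2 + σ := by linarith
  have key := gamma_hockey (1/2 + σ) ha n
  have hG : 0 < Real.Gamma ((n:ℝ) + 3/2 + σ) := Real.Gamma_pos_of_pos (by
    have : (0:ℝ) ≤ (n:ℝ) := Nat.cast_nonneg n
    linarith)
  have h3 : (0:ℝ) < n.factorial := by exact_mod_cast n.factorial_pos
  have e : ∀ j ∈ Finset.range (n+1), bco σ n j
      = ((n.factorial : ℝ) / Real.Gamma ((n:ℝ) + 3/2 + σ))
        * (Real.Gamma ((j:ℝ) + (1/2 + σ)) / (j.factorial : ℝ)) := by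
    intro j _
    unfold bco
    rw [show (j:ℝ) + 1/2 + σ = (j:ℝ) + (1/2 + σ) by ring]
    field_simp
  rw [Finset.sum_congr rfl e, ← Finset.mul_sum, key]
  rw [show (n:ℝ) + 1 + (1/2 + σ) = (n:ℝ) + 3/2 + σ by ring]
  set G := Real.Gamma ((n:ℝ) + 3/2 + σ) with hGdef
  have hG' : G ≠ 0 := ne_of_gt hG
  have h3' : (n.factorial : ℝ) ≠ 0 := ne_of_gt h3
  field_simp

/-- Main inductive lemma. -/
lemma main_ind (u σ : ℝ) (hu0 : 0 < u) (hu1 : u < 1) (hσ : u - 1/2 < σ) :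
    ∀ n k m, n < m →
      (∀ j, j ≤ n → DT u σ k m j ≤ DT u σ k m n) ∧
      0 ≤ DT u σ k m n ∧ 0 ≤ DS u σ k m n := by
  have hσ' : -(1/2) < σ := by linarith
  intro n
  induction n using Nat.strong_induction_on with
  | _ n IH =>
      intro k m hnm
      have hm1 : 1 ≤ m := by omega
      -- one-step monotonicity below n
      have step : ∀ j, j < n → DT u σ k m j ≤ DT u σ k m (j+1) := by
        intro j hj
        have hm2 : 2 ≤ m := by omega
        rw [DT_succ u σ k m j hm2]
        have hDS : 0 ≤ DS u σ (k+1) (m-1) j := by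
          have := IH j hj (k+1) (m-1) (by omega)
          exact this.2.2
        linarith
      -- chained monotonicity
      have chain : ∀ d j, j + d ≤ n → DT u σ k m j ≤ DT u σ k m (j+d) := by
        intro d
        induction d with
        | zero => intro j _; simp
        | succ d ihd =>
            intro j hjd
            calc DT u σ k m j ≤ DT u σ k m (j+d) := ihd j (by omega)
              _ ≤ DT u σ k m (j+d+1) := step (j+d) (by omega)
      have mono : ∀ j, j ≤ n → DT u σ k m j ≤ DT u σ k m n := by
        intro j hj
        have := chain (n - j) j (by omega)
        rwa [show j + (n - j) = n by omega] at this
      have hDT : 0 ≤ DT u σ k m n := le_trans (DT_zero_nonneg u σ hu0 hu1 k m hm1) (mono 0 (by omega))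
      refine ⟨mono, hDT, ?_⟩
      -- nonnegativity of DS
      rw [DS_eq]
      have hsum : ∑ j ∈ Finset.range (n+1), bco σ n j * DT u σ k m j
          ≤ ∑ j ∈ Finset.range (n+1), bco σ n j * DT u σ k m n := by
        apply Finset.sum_le_sum
        intro j hj
        exact mul_le_mul_of_nonneg_left (mono j (by
          have := Finset.mem_range.mp hj; omega)) (bco_nonneg σ hσ' n j)
      rw [← Finset.sum_mul, sum_bco σ hσ' n] at hsum
      have ha : (0:ℝ) < 1/2 + σ := by linarith
      have hu2 : u / (1/2 + σ) ≤ 1 := by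
        rw [div_le_one ha]; linarith
      have : u * ∑ j ∈ Finset.range (n+1), bco σ n j * DT u σ k m j
          ≤ u * (1 / (1/2 + σ) * DT u σ k m n) :=
        mul_le_mul_of_nonneg_left hsum (le_of_lt hu0)
      have h3 : u * (1 / (1/2 + σ) * DT u σ k m n) ≤ DT u σ k m n := by
        rw [show u * (1 / (1/2 + σ) * DT u σ k m n) = (u / (1/2 + σ)) * DT u σ k m n by ring]
        nlinarith
      linarith

theorem sigma_monotone_first_index (u σ : ℝ) (hu0 : 0 < u) (hu1 : u < 1)
    (hσ : u - 1/2 < σ) :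
    ∀ m n : ℕ, n < m →
      SigEE u σ m n ≤ (1 - (1 - u) / (m : ℝ)) * SigEE u σ (m - 1) n ∧
      SigOO u σ m n ≤ (1 - (1 - u) / (m : ℝ)) * SigOO u σ (m - 1) n := by
  intro m n hnm
  obtain ⟨-, hDT, hDS⟩ := main_ind u σ hu0 hu1 hσ n 0 m hnm
  unfold DT at hDT
  unfold DS at hDS
  simp only [Nat.add_zero, TD, SD, cc] at hDT hDS
  constructor <;> linarith
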